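/- Let P = U M Uᵀ be a real symmetric matrix with orthogonal U and diagonal M, and let H^{(ℓ)} follow the ClenshawGCN linear recurrence H^{(-2)} = H^{(-1)} = 0, H^{(ℓ)} = 2P H^{(ℓ-1)} − H^{(ℓ-2)} + α_ℓ H*. Then H^{(K)} = U · (Σ_{ℓ=0}^{K} α_{K−ℓ} U_ℓ(M)) · Uᵀ · H*, where U_ℓ(M) applies the ℓ-th second-kind Chebyshev polynomial entrywise to the diagonal of M. -/
import Mathlib


open Matrix Polynomial Finset

lemma cheb_scalar_step (α : ℕ → ℝ) (x : ℝ) (m : ℕ) :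
    (∑ j ∈ range (m+3), α (m+2-j) * ((Polynomial.Chebyshev.U ℝ j).eval x)) =
      2*x*(∑ j ∈ range (m+2), α (m+1-j) * ((Polynomial.Chebyshev.U ℝ j).eval x))
      - (∑ j ∈ range (m+1), α (m-j) * ((Polynomial.Chebyshev.U ℝ j).eval x)) + α (m+2) := by
  rw [Finset.sum_range_succ' (fun j => α (m+2-j) * ((Polynomial.Chebyshev.U ℝ j).eval x)) (m+2)]
  have hrec : ∀ j : ℕ, ((Polynomial.Chebyshev.U ℝ (j+1 : ℕ)).eval x) =
      2*x*((Polynomial.Chebyshev.U ℝ j).eval x) - (Polynomial.Chebyshev.U ℝ ((j:ℤ)-1)).eval x := by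
    intro j
    have h := Polynomial.Chebyshev.U_add_two ℝ ((j:ℤ)-1)
    have h2 : ((j:ℤ)-1) + 2 = ((j+1 : ℕ) : ℤ) := by push_cast; ring
    have h3 : ((j:ℤ)-1) + 1 = (j : ℤ) := by ring
    rw [h2, h3] at h
    push_cast at h ⊢
    simp [h]
  have e1 : ∑ j ∈ range (m+2), α (m+2-(j+1)) * ((Polynomial.Chebyshev.U ℝ (j+1:ℕ)).eval x)
      = 2*x*(∑ j ∈ range (m+2), α (m+1-j) * ((Polynomial.Chebyshev.U ℝ j).eval x))
        - ∑ j ∈ range (m+2), α (m+1-j) * ((Polynomial.Chebyshev.U ℝ ((j:ℤ)-1)).eval x) := by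
    rw [Finset.mul_sum, ← Finset.sum_sub_distrib]
    refine Finset.sum_congr rfl fun j _ => ?_
    have : m+2-(j+1) = m+1-j := by omega
    rw [this, hrec j]; ring
  have e2 : ∑ j ∈ range (m+2), α (m+1-j) * ((Polynomial.Chebyshev.U ℝ ((j:ℤ)-1)).eval x)
      = ∑ j ∈ range (m+1), α (m-j) * ((Polynomial.Chebyshev.U ℝ j).eval x) := by
    rw [Finset.sum_range_succ' (fun j => α (m+1-j) * ((Polynomial.Chebyshev.U ℝ ((j:ℤ)-1)).eval x)) (m+1)]
    simp only [Nat.cast_zero, zero_sub, Polynomial.Chebyshev.U_neg_one, Polynomial.eval_zero,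
      mul_zero, add_zero]
    refine Finset.sum_congr rfl fun j _ => ?_
    have h1 : m+1-(j+1) = m-j := by omega
    have h2 : ((j+1:ℕ):ℤ) - 1 = (j:ℤ) := by push_cast; ring
    rw [h1, h2]
  rw [e1, e2]
  simp [Polynomial.Chebyshev.U_zero]

lemma diag_sum_smul {n : ℕ} [DecidableEq (Fin n)] (F : Finset ℕ) (c : ℕ → ℝ)
    (f : ℕ → Fin n → ℝ) :
    ∑ ℓ ∈ F, c ℓ • Matrix.diagonal (f ℓ)
      = Matrix.diagonal (fun i => ∑ ℓ ∈ F, c ℓ * f ℓ i) := by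
  ext i j
  by_cases h : i = j <;>
    simp [Matrix.sum_apply, Matrix.diagonal_apply, h]

/-- Spectral-filter form of the ClenshawGCN output: if P = U M Uᵀ with U
orthogonal and M = diag(μ), and H^{(ℓ)} follows the linear ClenshawGCN
recurrence, then H^{(K)} = U (Σ_{ℓ=0}^K α_{K-ℓ} U_ℓ(M)) Uᵀ H*, where U_ℓ(M)
applies the ℓ-th second-kind Chebyshev polynomial to the diagonal of M. -/
theorem clenshawgcn_spectral_form {n d : ℕ} [DecidableEq (Fin n)] (K : ℕ)
    (U : Matrix (Fin n) (Fin n) ℝ) (μ : Fin n → ℝ)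
    (hU : U * Uᵀ = 1) (hU' : Uᵀ * U = 1)
    (P : Matrix (Fin n) (Fin n) ℝ) (hP : P = U * Matrix.diagonal μ * Uᵀ)
    (Hs : Matrix (Fin n) (Fin d) ℝ) (α : ℕ → ℝ)
    (H : ℤ → Matrix (Fin n) (Fin d) ℝ)
    (hinit2 : H (-2) = 0) (hinit1 : H (-1) = 0)
    (hrec : ∀ ℓ : ℕ, ℓ ≤ K →
      H ℓ = (2 : ℝ) • (P * H ((ℓ : ℤ) - 1)) - H ((ℓ : ℤ) - 2) + α ℓ • Hs) :
    H K = U * (∑ ℓ ∈ range (K + 1),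
        α (K - ℓ) •
          Matrix.diagonal (fun i => (Polynomial.Chebyshev.U ℝ ℓ).eval (μ i))) *
      Uᵀ * Hs := by
  have hPU : P * U = U * Matrix.diagonal μ := by
    rw [hP, Matrix.mul_assoc (U * Matrix.diagonal μ) Uᵀ U, hU', Matrix.mul_one]
  set s : ℕ → Fin n → ℝ := fun m i =>
    ∑ j ∈ range (m+1), α (m-j) * ((Polynomial.Chebyshev.U ℝ j).eval (μ i)) with hs
  have haux : ∀ m : ℕ, m ≤ K →
      H m = U * Matrix.diagonal (s m) * Uᵀ * Hs := by
    intro m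
    induction m using Nat.strong_induction_on with
    | _ m ih =>
      match m with
      | 0 =>
        intro h0
        have h := hrec 0 h0
        norm_num at h
        rw [hinit1, hinit2] at h
        have hsz : s 0 = fun _ => α 0 := by
          funext i; simp [hs]
        push_cast
        rw [h, hsz]
        have : (Matrix.diagonal (fun _ : Fin n => α 0)) = α 0 • (1 : Matrix (Fin n) (Fin n) ℝ) := by
          ext i j; by_cases hij : i = j <;> simp [Matrix.diagonal_apply, hij, Matrix.one_apply]
        rw [this]
        simp [Matrix.mul_smul, Matrix.smul_mul, hU]
      | 1 =>
        intro h1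
        have h0 : H 0 = α 0 • Hs := by
          have h := hrec 0 (le_trans (by norm_num) h1)
          norm_num at h
          rw [hinit1, hinit2] at h
          simpa using h
        have h := hrec 1 h1
        norm_num at h
        rw [hinit1, h0] at h
        have hsz : Matrix.diagonal (s 1)
            = α 1 • (1 : Matrix (Fin n) (Fin n) ℝ) + (2 * α 0) • Matrix.diagonal μ := by
          ext i j
          by_cases hij : i = j
          · subst hij
            simp [hs, Finset.sum_range_succ, Matrix.diagonal_apply, Matrix.one_apply,
              Polynomial.Chebyshev.U_zero, Polynomial.Chebyshev.U_one]
            ring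
          · simp [Matrix.diagonal_apply, hij, Matrix.one_apply]
        push_cast
        rw [h, hsz]
        rw [hP]
        simp only [Matrix.mul_add, Matrix.add_mul, Matrix.mul_smul, Matrix.smul_mul,
          Matrix.mul_one, Matrix.one_mul, hU, Matrix.smul_apply, smul_smul]
        rw [Matrix.mul_assoc (U * Matrix.diagonal μ) Uᵀ Hs]
        module
      | (m+2) =>
        intro h2
        have hm1 : m + 1 ≤ K := le_trans (by omega) h2
        have hm0 : m ≤ K := le_trans (by omega) h2
        have ih1 := ih (m+1) (by omega) hm1
        have ih0 := ih m (by omega) hm0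
        have h := hrec (m+2) h2
        have c1 : ((m+2:ℕ):ℤ) - 1 = ((m+1:ℕ):ℤ) := by push_cast; ring
        have c2 : ((m+2:ℕ):ℤ) - 2 = ((m:ℕ):ℤ) := by push_cast; ring
        rw [c1, c2, ih1, ih0] at h
        have key : (2:ℝ) • (Matrix.diagonal μ * Matrix.diagonal (s (m+1)))
            - Matrix.diagonal (s m) + α (m+2) • (1 : Matrix (Fin n) (Fin n) ℝ)
            = Matrix.diagonal (s (m+2)) := by
          rw [Matrix.diagonal_mul_diagonal]
          ext i j
          by_cases hij : i = j
          · subst hij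
            simp only [Matrix.add_apply, Matrix.sub_apply, Matrix.smul_apply,
              Matrix.diagonal_apply_eq, Matrix.one_apply_eq, smul_eq_mul, mul_one]
            have := cheb_scalar_step α (μ i) m
            simp only [hs]
            have e3 : m + 2 + 1 = m + 3 := by ring
            rw [e3]
            linarith [this]
          · simp [Matrix.diagonal_apply_ne _ hij, Matrix.one_apply_ne hij]
        rw [h, ← key]
        have r1 : P * (U * Matrix.diagonal (s (m+1)) * Uᵀ * Hs)
            = U * (Matrix.diagonal μ * Matrix.diagonal (s (m+1))) * Uᵀ * Hs := by
          simp only [← Matrix.mul_assoc]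
          rw [hPU]
        rw [r1]
        simp only [Matrix.mul_add, Matrix.add_mul, Matrix.mul_sub, Matrix.sub_mul,
          Matrix.mul_smul, Matrix.smul_mul, Matrix.mul_one, Matrix.one_mul, hU]
  have hK := haux K le_rfl
  rw [hK, diag_sum_smul]
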